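/- Let E be a Banach space with the property that every Fredholm operator in 𝓑(E) has index 0. If the set of invertible elements of the Calkin algebra 𝓠(E) = 𝓑(E)/𝓚(E) is dense in 𝓠(E), then both 𝓑(E) and 𝓠(E) have weakly open multiplication. -/

import Mathlib

open Pointwise

open Metric Set Filter Topology in
theorem aux_interior {R : Type*} [NormedRing R] {a b : R} {ε : ℝ} (hε : 0 < ε)
    (u : Rˣ) (hu : (u : R) ∈ Metric.ball a ε) :
    (interior (Metric.ball a ε * Metric.ball b ε)).Nonempty := by
  set O : Set R := (fun y => (↑u⁻¹ : R) * y) ⁻¹' Metric.ball b ε with hO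
  have hOopen : IsOpen O := (isOpen_ball).preimage (continuous_const.mul continuous_id)
  have hOsub : O ⊆ Metric.ball a ε * Metric.ball b ε := by
    intro y hy
    have : y = (u : R) * ((↑u⁻¹ : R) * y) := by
      rw [← mul_assoc, Units.mul_inv, one_mul]
    rw [this]
    exact Set.mul_mem_mul hu hy
  have hmem : (u : R) * b ∈ O := by
    simp only [hO, Set.mem_preimage, ← mul_assoc, Units.inv_mul, one_mul]
    exact mem_ball_self hε
  exact ⟨(u : R) * b, (hOopen.subset_interior_iff.mpr hOsub) hmem⟩

section Aux

open Metric Set Filter Topology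

variable {𝕜 : Type*} [RCLike 𝕜] {E : Type*} [NormedAddCommGroup E] [NormedSpace 𝕜 E]
  [CompleteSpace E]

set_option linter.unusedSectionVars false

theorem aux_ker_findim {K : E →L[𝕜] E} (hK : IsCompactOperator (K : E → E)) :
    FiniteDimensional 𝕜 (LinearMap.ker ((1 + K : E →L[𝕜] E) : E →ₗ[𝕜] E)) := by
  obtain ⟨C, hCcomp, hC⟩ := hK.image_closedBall_subset_compact 1
  apply FiniteDimensional.of_isCompact_closedBall₀ 𝕜 (r := 1) one_pos
  have hemb : Topology.IsEmbedding ((↑) : LinearMap.ker ((1 + K : E →L[𝕜] E) : E →ₗ[𝕜] E) → E) :=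
    isometry_subtype_coe.isEmbedding
  rw [hemb.isCompact_iff]
  have himg : ((↑) : LinearMap.ker ((1 + K : E →L[𝕜] E) : E →ₗ[𝕜] E) → E) '' Metric.closedBall 0 1
      = {x : E | x ∈ LinearMap.ker ((1 + K : E →L[𝕜] E) : E →ₗ[𝕜] E) ∧ ‖x‖ ≤ 1} := by
    ext z
    constructor
    · rintro ⟨y, hy, rfl⟩
      exact ⟨y.2, mem_closedBall_zero_iff.mp hy⟩
    · rintro ⟨h1, h2⟩
      exact ⟨⟨z, h1⟩, mem_closedBall_zero_iff.mpr h2, rfl⟩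
  rw [himg]
  have hclosed : IsClosed {x : E | x ∈ LinearMap.ker ((1 + K : E →L[𝕜] E) : E →ₗ[𝕜] E) ∧ ‖x‖ ≤ 1} := by
    have : {x : E | x ∈ LinearMap.ker ((1 + K : E →L[𝕜] E) : E →ₗ[𝕜] E) ∧ ‖x‖ ≤ 1}
        = ((LinearMap.ker ((1 + K : E →L[𝕜] E) : E →ₗ[𝕜] E) : Submodule 𝕜 E) : Set E) ∩ Metric.closedBall 0 1 := by
      ext x; simp [mem_closedBall_zero_iff]
    rw [this]
    exact (ContinuousLinearMap.isClosed_ker _).inter isClosed_closedBall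
  have hsub : {x : E | x ∈ LinearMap.ker ((1 + K : E →L[𝕜] E) : E →ₗ[𝕜] E) ∧ ‖x‖ ≤ 1} ⊆ (fun y : E => -y) '' C := by
    rintro x ⟨h1, h2⟩
    have hx : x + K x = 0 := by
      simpa [ContinuousLinearMap.add_apply, ContinuousLinearMap.one_apply] using h1
    have : K x ∈ C := hC ⟨x, by simpa [mem_closedBall_zero_iff] using h2, rfl⟩
    exact ⟨K x, this, neg_eq_of_add_eq_zero_left hx⟩
  exact IsCompact.of_isClosed_subset (hCcomp.image continuous_neg) hclosed hsub

theorem aux_quot_findim {R₁ R₂ : Submodule 𝕜 E} (h : R₁ ≤ R₂)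
    (hfd : FiniteDimensional 𝕜 (E ⧸ R₁)) : FiniteDimensional 𝕜 (E ⧸ R₂) := by
  have hs : Function.Surjective (Submodule.mapQ R₁ R₂ LinearMap.id h) := by
    intro x
    obtain ⟨y, rfl⟩ := Submodule.mkQ_surjective R₂ x
    exact ⟨Submodule.Quotient.mk y, by simp [Submodule.mapQ_apply]⟩
  exact Module.Finite.of_surjective _ hs

theorem aux_coker_findim {K : E →L[𝕜] E} (hK : IsCompactOperator (K : E → E)) :
    FiniteDimensional 𝕜 (E ⧸ LinearMap.range ((1 + K : E →L[𝕜] E) : E →ₗ[𝕜] E)) := by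
  classical
  set A : E →L[𝕜] E := 1 + K with hA
  have hAx : ∀ x : E, A x = x + K x := fun x => by
    simp [hA, ContinuousLinearMap.add_apply, ContinuousLinearMap.one_apply]
  haveI hNfd : FiniteDimensional 𝕜 (LinearMap.ker (A : E →ₗ[𝕜] E)) := aux_ker_findim hK
  set N : Submodule 𝕜 E := LinearMap.ker (A : E →ₗ[𝕜] E) with hN
  obtain ⟨P, hP⟩ := Submodule.ClosedComplemented.of_finiteDimensional N
  set M : Submodule 𝕜 E := LinearMap.ker (((N.subtypeL).comp P : E →L[𝕜] E) : E →ₗ[𝕜] E) with hM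
  have hMmem : ∀ x : E, x ∈ M ↔ (P x : E) = 0 := by
    intro x
    simp [hM, LinearMap.mem_ker, ContinuousLinearMap.comp_apply]
  have hMclosed : IsClosed (M : Set E) := ContinuousLinearMap.isClosed_ker _
  have hmemM : ∀ x : E, x - (P x : E) ∈ M := by
    intro x
    rw [hMmem]
    have : P (x - (P x : E)) = 0 := by rw [map_sub, hP (P x), sub_self]
    rw [this, Submodule.coe_zero]
  have hNM : ∀ x, x ∈ N → x ∈ M → x = 0 := by
    intro x hxN hxM
    have h1 : (P x : E) = 0 := (hMmem x).mp hxM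
    have h2 : P x = ⟨x, hxN⟩ := hP ⟨x, hxN⟩
    rw [h2] at h1
    exact h1
  -- A is bounded below on M
  have hbdd : ∃ c : ℝ, 0 < c ∧ ∀ x ∈ M, c * ‖x‖ ≤ ‖A x‖ := by
    by_contra hcon
    push_neg at hcon
    have hseq : ∀ n : ℕ, ∃ x : E, x ∈ M ∧ ‖x‖ = 1 ∧ ‖A x‖ < 1 / (n + 1) := by
      intro n
      obtain ⟨x, hxM, hxlt⟩ := hcon (1 / (n + 1)) (by positivity)
      have hx0 : x ≠ 0 := by
        rintro rfl
        simp at hxlt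
      have hnx : (0:ℝ) < ‖x‖ := norm_pos_iff.mpr hx0
      refine ⟨((‖x‖ : 𝕜))⁻¹ • x, M.smul_mem _ hxM, ?_, ?_⟩
      · rw [norm_smul, norm_inv, RCLike.norm_ofReal, abs_of_pos hnx, inv_mul_cancel₀ hnx.ne']
      · rw [map_smul, norm_smul, norm_inv, RCLike.norm_ofReal, abs_of_pos hnx]
        calc ‖x‖⁻¹ * ‖A x‖ < ‖x‖⁻¹ * (1 / (n + 1) * ‖x‖) := by
              exact mul_lt_mul_of_pos_left hxlt (by positivity)
          _ = 1 / (n + 1) := by field_simp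
    choose x hxM hx1 hxA using hseq
    obtain ⟨C, hCc, hC⟩ := hK.image_closedBall_subset_compact 1
    have hKx : ∀ n, K (x n) ∈ C :=
      fun n => hC ⟨x n, by simp [mem_closedBall_zero_iff, (hx1 n).le], rfl⟩
    obtain ⟨y, hyC, φ, hφ, hconv⟩ := hCc.tendsto_subseq hKx
    have hA0 : Tendsto (fun n => A (x (φ n))) atTop (𝓝 0) := by
      refine squeeze_zero_norm (fun n => ?_) tendsto_one_div_add_atTop_nhds_zero_nat
      refine (hxA (φ n)).le.trans ?_
      apply one_div_le_one_div_of_le (by positivity)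
      have h5 : (n : ℝ) ≤ (φ n : ℝ) := Nat.cast_le.mpr hφ.le_apply
      linarith
    have hxconv : Tendsto (fun n => x (φ n)) atTop (𝓝 (-y)) := by
      have heq : ∀ n, x (φ n) = A (x (φ n)) - K (x (φ n)) := by
        intro n; rw [hAx]; abel
      have : Tendsto (fun n => A (x (φ n)) - K (x (φ n))) atTop (𝓝 (0 - y)) :=
        hA0.sub hconv
      rw [zero_sub] at this
      exact this.congr fun n => (heq n).symm
    have hyM : -y ∈ M :=
      hMclosed.mem_of_tendsto hxconv (Eventually.of_forall fun n => hxM (φ n))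
    have hyN : -y ∈ N := by
      have h1 : Tendsto (fun n => A (x (φ n))) atTop (𝓝 (A (-y))) :=
        (A.continuous.tendsto _).comp hxconv
      exact LinearMap.mem_ker.mpr (tendsto_nhds_unique h1 hA0)
    have hy0 : -y = 0 := hNM _ hyN hyM
    have hn1 : Tendsto (fun n => ‖x (φ n)‖) atTop (𝓝 ‖(-y : E)‖) :=
      (continuous_norm.tendsto _).comp hxconv
    have h6 : Tendsto (fun _ : ℕ => (1:ℝ)) atTop (𝓝 ‖(-y : E)‖) := by
      simpa [hx1] using hn1
    have h7 : ‖(-y : E)‖ = 1 := tendsto_nhds_unique h6 tendsto_const_nhds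
    rw [hy0, norm_zero] at h7
    exact zero_ne_one h7
  obtain ⟨c, hc, hcb⟩ := hbdd
  have hrange : ((LinearMap.range (A : E →ₗ[𝕜] E) : Submodule 𝕜 E) : Set E) = A '' (M : Set E) := by
    ext z
    constructor
    · rintro ⟨x, rfl⟩
      refine ⟨x - (P x : E), hmemM x, ?_⟩
      have hPx : A (P x : E) = 0 := (P x).2
      rw [map_sub, hPx, sub_zero]
      rfl
    · rintro ⟨x, _, rfl⟩
      exact ⟨x, rfl⟩
  haveI : CompleteSpace M := hMclosed.completeSpace_coe
  set A' : M →L[𝕜] E := A.comp M.subtypeL with hA'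
  have hanti : AntilipschitzWith (⟨c, hc.le⟩ : NNReal)⁻¹ A' := by
    apply ContinuousLinearMap.antilipschitz_of_bound
    intro x
    have h1 := hcb (x : E) x.2
    have h2 : ‖A' x‖ = ‖A (x : E)‖ := rfl
    show ‖(x : E)‖ ≤ _
    change ‖(x : E)‖ ≤ c⁻¹ * ‖A' x‖
    rw [h2, inv_mul_eq_div, le_div_iff₀ hc, mul_comm]
    exact h1
  have hclosedrange : IsClosed (Set.range A') :=
    hanti.isClosed_range A'.uniformContinuous
  have hRclosed : IsClosed ((LinearMap.range (A : E →ₗ[𝕜] E) : Submodule 𝕜 E) : Set E) := by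
    rw [hrange]
    have : A '' (M : Set E) = Set.range A' := by
      ext z
      constructor
      · rintro ⟨x, hx, rfl⟩
        exact ⟨⟨x, hx⟩, rfl⟩
      · rintro ⟨x, rfl⟩
        exact ⟨(x : E), x.2, rfl⟩
    rw [this]
    exact hclosedrange
  -- now the quotient
  haveI : IsClosed ((LinearMap.range (A : E →ₗ[𝕜] E) : Submodule 𝕜 E) : Set E) := hRclosed
  set R : Submodule 𝕜 E := LinearMap.range (A : E →ₗ[𝕜] E) with hR
  apply FiniteDimensional.of_isCompact_closedBall₀ 𝕜 (r := 1) one_pos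
  obtain ⟨C, hCc, hC⟩ := hK.image_closedBall_subset_compact 2
  have hmkcont : Continuous (fun x : E => (Submodule.Quotient.mk x : E ⧸ R)) := by
    have : Continuous (R.mkQ : E → E ⧸ R) :=
      AddMonoidHomClass.continuous_of_bound R.mkQ 1
        (fun x => by simpa using Submodule.Quotient.norm_mk_le R x)
    exact this
  have hsub : Metric.closedBall (0 : E ⧸ R) 1 ⊆
      (fun x : E => (Submodule.Quotient.mk x : E ⧸ R)) '' ((fun y : E => -y) '' C) := by
    intro q hq
    obtain ⟨m, rfl, hm⟩ := Submodule.Quotient.norm_mk_lt q one_pos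
    have hm2 : ‖m‖ ≤ 2 := by
      have h3 : ‖(Submodule.Quotient.mk m : E ⧸ R)‖ ≤ 1 := mem_closedBall_zero_iff.mp hq
      linarith
    have hKm : K m ∈ C := hC ⟨m, by simpa [mem_closedBall_zero_iff] using hm2, rfl⟩
    refine ⟨-(K m), ⟨K m, hKm, rfl⟩, ?_⟩
    rw [Submodule.Quotient.eq]
    refine ⟨-m, ?_⟩
    rw [map_neg, ContinuousLinearMap.coe_coe, hAx]
    abel
  exact IsCompact.of_isClosed_subset ((hCc.image continuous_neg).image hmkcont)
    isClosed_closedBall hsub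

theorem aux_unit_near
    (hfred : ∀ T : E →L[𝕜] E,
      FiniteDimensional 𝕜 (LinearMap.ker (T : E →ₗ[𝕜] E)) →
      FiniteDimensional 𝕜 (E ⧸ LinearMap.range (T : E →ₗ[𝕜] E)) →
      Module.finrank 𝕜 (LinearMap.ker (T : E →ₗ[𝕜] E)) = Module.finrank 𝕜 (E ⧸ LinearMap.range (T : E →ₗ[𝕜] E)))
    {T' S : E →L[𝕜] E}
    (hK₁ : IsCompactOperator ((T' * S - 1 : E →L[𝕜] E) : E → E))
    (hK₂ : IsCompactOperator ((S * T' - 1 : E →L[𝕜] E) : E → E))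
    {δ : ℝ} (hδ : 0 < δ) :
    ∃ U : E →L[𝕜] E, IsUnit U ∧ ‖U - T'‖ < δ := by
  classical
  -- kernel of T' is finite dimensional
  have hkle : LinearMap.ker (T' : E →ₗ[𝕜] E) ≤ LinearMap.ker ((1 + (S * T' - 1) : E →L[𝕜] E) : E →ₗ[𝕜] E) := by
    intro x hx
    have hx0 : T' x = 0 := hx
    simp [LinearMap.mem_ker, ContinuousLinearMap.add_apply, ContinuousLinearMap.one_apply,
      ContinuousLinearMap.sub_apply, ContinuousLinearMap.mul_apply, hx0]
  haveI fd1 : FiniteDimensional 𝕜 (LinearMap.ker ((1 + (S * T' - 1) : E →L[𝕜] E) : E →ₗ[𝕜] E)) := aux_ker_findim hK₂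
  haveI fdN : FiniteDimensional 𝕜 (LinearMap.ker (T' : E →ₗ[𝕜] E)) := Submodule.finiteDimensional_of_le hkle
  -- cokernel of T' is finite dimensional
  have hrle : LinearMap.range ((1 + (T' * S - 1) : E →L[𝕜] E) : E →ₗ[𝕜] E) ≤ LinearMap.range (T' : E →ₗ[𝕜] E) := by
    rintro x ⟨y, rfl⟩
    exact ⟨S y, by simp [ContinuousLinearMap.add_apply, ContinuousLinearMap.one_apply,
      ContinuousLinearMap.sub_apply, ContinuousLinearMap.mul_apply]⟩
  haveI fdC : FiniteDimensional 𝕜 (E ⧸ LinearMap.range (T' : E →ₗ[𝕜] E)) :=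
    aux_quot_findim hrle (aux_coker_findim hK₁)
  -- the correction operator F
  set N : Submodule 𝕜 E := LinearMap.ker (T' : E →ₗ[𝕜] E) with hN
  obtain ⟨e⟩ : Nonempty (N ≃ₗ[𝕜] (E ⧸ LinearMap.range (T' : E →ₗ[𝕜] E))) :=
    FiniteDimensional.nonempty_linearEquiv_of_finrank_eq (hfred T' fdN fdC)
  obtain ⟨P, hP⟩ := Submodule.ClosedComplemented.of_finiteDimensional N
  let b := Module.finBasis 𝕜 (E ⧸ LinearMap.range (T' : E →ₗ[𝕜] E))
  have hwex : ∀ i, ∃ w : E, Submodule.Quotient.mk w = b i :=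
    fun i => Submodule.mkQ_surjective _ (b i)
  choose w hw using hwex
  set σ : (E ⧸ LinearMap.range (T' : E →ₗ[𝕜] E)) →ₗ[𝕜] E := b.constr 𝕜 w with hσdef
  have hσ : ∀ cc : E ⧸ LinearMap.range (T' : E →ₗ[𝕜] E), (LinearMap.range (T' : E →ₗ[𝕜] E)).mkQ (σ cc) = cc := by
    have heq : (LinearMap.range (T' : E →ₗ[𝕜] E)).mkQ.comp σ = LinearMap.id := by
      apply b.ext
      intro i
      simp only [LinearMap.comp_apply, hσdef, Module.Basis.constr_basis, LinearMap.id_apply,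
        Submodule.mkQ_apply]
      exact hw i
    intro cc
    exact DFunLike.congr_fun heq cc
  set g : N →ₗ[𝕜] E := σ ∘ₗ (e : N →ₗ[𝕜] (E ⧸ LinearMap.range (T' : E →ₗ[𝕜] E))) with hg
  set gL : N →L[𝕜] E := LinearMap.toContinuousLinearMap g with hgL
  set F : E →L[𝕜] E := gL.comp P with hF
  -- F is a compact operator
  haveI := FiniteDimensional.proper_rclike 𝕜 N
  have hFc : IsCompactOperator (F : E → E) := by
    refine ⟨gL '' Metric.closedBall 0 ‖P‖, (isCompact_closedBall (0 : N) ‖P‖).image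
      gL.continuous, ?_⟩
    apply Filter.mem_of_superset (Metric.ball_mem_nhds 0 one_pos)
    intro x hx
    refine ⟨P x, ?_, rfl⟩
    rw [mem_closedBall_zero_iff]
    calc ‖P x‖ ≤ ‖P‖ * ‖x‖ := P.le_opNorm x
      _ ≤ ‖P‖ * 1 := by
          exact mul_le_mul_of_nonneg_left (mem_ball_zero_iff.mp hx).le (norm_nonneg P)
      _ = ‖P‖ := mul_one _
  -- injectivity of T' + c • F for c ≠ 0
  have hinj : ∀ c : 𝕜, c ≠ 0 → ∀ x : E, T' x + c • F x = 0 → x = 0 := by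
    intro c hc x hx
    have h1 : (LinearMap.range (T' : E →ₗ[𝕜] E)).mkQ (T' x + c • F x) = 0 := by rw [hx, map_zero]
    rw [map_add, map_smul] at h1
    have h2 : (LinearMap.range (T' : E →ₗ[𝕜] E)).mkQ (T' x) = 0 := by
      rw [Submodule.mkQ_apply, Submodule.Quotient.mk_eq_zero]
      exact ⟨x, rfl⟩
    have h3 : (LinearMap.range (T' : E →ₗ[𝕜] E)).mkQ (F x) = e (P x) := by
      have : F x = σ (e (P x)) := rfl
      rw [this, hσ]
    rw [h2, h3, zero_add] at h1
    have h4 : e (P x) = 0 := by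
      rcases smul_eq_zero.mp h1 with h | h
      · exact absurd h hc
      · exact h
    have h5 : P x = 0 := by
      have := e.map_eq_zero_iff.mp h4
      exact this
    have h6 : F x = 0 := by
      have : F x = σ (e (P x)) := rfl
      rw [this, h5, map_zero, map_zero]
    rw [h6, smul_zero, add_zero] at hx
    have hxN : x ∈ N := hx
    have h7 : P x = ⟨x, hxN⟩ := hP ⟨x, hxN⟩
    rw [h7] at h5
    exact congrArg Subtype.val h5
  -- choose the scalar
  set r : ℝ := δ / (‖F‖ + 1) with hr
  have hFn : (0:ℝ) < ‖F‖ + 1 := by positivity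
  have hrpos : 0 < r := div_pos hδ hFn
  set c : 𝕜 := (r : 𝕜) with hcdef
  have hc0 : c ≠ 0 := by
    simp only [hcdef, ne_eq, RCLike.ofReal_eq_zero]
    exact hrpos.ne'
  set U : E →L[𝕜] E := T' + c • F with hU
  have hkerU : LinearMap.ker (U : E →ₗ[𝕜] E) = ⊥ := by
    rw [Submodule.eq_bot_iff]
    intro x hx
    apply hinj c hc0 x
    simpa [hU, ContinuousLinearMap.add_apply, ContinuousLinearMap.smul_apply] using hx
  -- cokernel of U
  have hUS : U * S = 1 + ((T' * S - 1) + c • (F * S)) := by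
    rw [hU, add_mul, smul_mul_assoc]
    abel
  have hK' : IsCompactOperator (((T' * S - 1) + c • (F * S) : E →L[𝕜] E) : E → E) := by
    have h1 : IsCompactOperator ((F * S : E →L[𝕜] E) : E → E) := by
      have := hFc.comp_clm S
      simpa [Function.comp] using this
    have h2 : IsCompactOperator ((c • (F * S) : E →L[𝕜] E) : E → E) := by
      have := h1.smul c
      simpa using this
    have := hK₁.add h2
    simpa using this
  have hrleU : LinearMap.range ((1 + ((T' * S - 1) + c • (F * S)) : E →L[𝕜] E) : E →ₗ[𝕜] E) ≤ LinearMap.range (U : E →ₗ[𝕜] E) := by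
    rw [← hUS]
    rintro x ⟨y, rfl⟩
    exact ⟨S y, rfl⟩
  haveI fdCU : FiniteDimensional 𝕜 (E ⧸ LinearMap.range (U : E →ₗ[𝕜] E)) :=
    aux_quot_findim hrleU (aux_coker_findim hK')
  haveI fdKU : FiniteDimensional 𝕜 (LinearMap.ker (U : E →ₗ[𝕜] E)) :=
    Submodule.finiteDimensional_of_le (le_of_eq hkerU)
  -- index zero gives surjectivity
  have hind := hfred U fdKU fdCU
  rw [hkerU, finrank_bot] at hind
  haveI : Subsingleton (E ⧸ LinearMap.range (U : E →ₗ[𝕜] E)) := Module.finrank_zero_iff.mp hind.symm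
  have hrangeU : LinearMap.range (U : E →ₗ[𝕜] E) = ⊤ := Submodule.Quotient.subsingleton_iff.mp this
  -- U is invertible
  let eU := ContinuousLinearEquiv.ofBijective U hkerU hrangeU
  have heU : ∀ x, eU x = U x := fun x =>
    congrFun (ContinuousLinearEquiv.coeFn_ofBijective U hkerU hrangeU) x
  refine ⟨U, ?_, ?_⟩
  · refine isUnit_iff_exists.mpr ⟨(eU.symm : E →L[𝕜] E), ?_, ?_⟩
    · ext x
      simp only [ContinuousLinearMap.mul_apply, ContinuousLinearMap.one_apply,
        ContinuousLinearMap.coe_coe]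
      rw [← heU]
      exact eU.apply_symm_apply x
    · ext x
      simp only [ContinuousLinearMap.mul_apply, ContinuousLinearMap.one_apply,
        ContinuousLinearMap.coe_coe]
      rw [← heU]
      exact eU.symm_apply_apply x
  · have : U - T' = c • F := by rw [hU]; abel
    have h8 : ‖c • F‖ = r * ‖F‖ := by
      rw [norm_smul c F, hcdef, RCLike.norm_ofReal, abs_of_pos hrpos]
    rw [this, h8]
    calc r * ‖F‖ < r * (‖F‖ + 1) := by
          exact mul_lt_mul_of_pos_left (by linarith) hrpos
      _ = δ := by rw [hr]; field_simp

end Aux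

/-- Suppose every Fredholm operator on a Banach space `E` has index `0`.  If the
invertible elements of the Calkin algebra `𝓠(E) = 𝓑(E)/𝓚(E)` are dense, then both
`𝓑(E)` and `𝓠(E)` have weakly open multiplication.  The Calkin algebra is modelled as a
Banach algebra `Q` together with a surjective ring homomorphism `π : 𝓑(E) →+* Q` whose
kernel is exactly the ideal of compact operators and which satisfies the quotient-norm
identity `π '' B(T, r) = B(π T, r)`. -/
theorem weakly_open_of_index_zero_and_tsr_one_calkin
    {𝕜 : Type*} [RCLike 𝕜] {E : Type*} [NormedAddCommGroup E] [NormedSpace 𝕜 E]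
    [CompleteSpace E] {Q : Type*} [NormedRing Q] [NormedAlgebra 𝕜 Q] [CompleteSpace Q]
    (hfred : ∀ T : E →L[𝕜] E,
      FiniteDimensional 𝕜 (LinearMap.ker (T : E →ₗ[𝕜] E)) →
      FiniteDimensional 𝕜 (E ⧸ LinearMap.range (T : E →ₗ[𝕜] E)) →
      Module.finrank 𝕜 (LinearMap.ker (T : E →ₗ[𝕜] E)) = Module.finrank 𝕜 (E ⧸ LinearMap.range (T : E →ₗ[𝕜] E)))
    (π : (E →L[𝕜] E) →+* Q) (hsurj : Function.Surjective π)
    (hker : ∀ T : E →L[𝕜] E, π T = 0 ↔ IsCompactOperator T)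
    (hquot : ∀ (T : E →L[𝕜] E) (r : ℝ), π '' Metric.ball T r = Metric.ball (π T) r)
    (hdense : Dense {q : Q | IsUnit q}) :
    (∀ T S : E →L[𝕜] E, ∀ ε > 0,
        (interior (Metric.ball T ε * Metric.ball S ε)).Nonempty) ∧
    (∀ a b : Q, ∀ ε > 0,
        (interior (Metric.ball a ε * Metric.ball b ε)).Nonempty) := by
  constructor
  · intro T S ε hε
    obtain ⟨q, hqU, hqball⟩ := hdense.exists_mem_open Metric.isOpen_ball
      ⟨π T, Metric.mem_ball_self (half_pos hε)⟩
    rw [← hquot T (ε / 2)] at hqball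
    obtain ⟨T', hT', hπT'⟩ := hqball
    obtain ⟨u, hu⟩ := hqU
    obtain ⟨S₀, hS₀⟩ := hsurj (↑u⁻¹ : Q)
    have hK₁ : IsCompactOperator ((T' * S₀ - 1 : E →L[𝕜] E) : E → E) := by
      apply (hker _).mp
      rw [map_sub, map_mul, map_one, hπT', hS₀, ← hu, u.mul_inv, sub_self]
    have hK₂ : IsCompactOperator ((S₀ * T' - 1 : E →L[𝕜] E) : E → E) := by
      apply (hker _).mp
      rw [map_sub, map_mul, map_one, hπT', hS₀, ← hu, u.inv_mul, sub_self]
    obtain ⟨U, hUunit, hUnorm⟩ := aux_unit_near hfred hK₁ hK₂ (half_pos hε)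
    have hUball : U ∈ Metric.ball T ε := by
      rw [Metric.mem_ball] at hT' ⊢
      calc dist U T ≤ dist U T' + dist T' T := dist_triangle U T' T
        _ < ε / 2 + ε / 2 := by
            apply add_lt_add _ hT'
            rw [dist_eq_norm]
            exact hUnorm
        _ = ε := add_halves ε
    refine aux_interior hε hUunit.unit ?_
    rw [hUunit.unit_spec]
    exact hUball
  · intro a b ε hε
    obtain ⟨q, hqU, hqball⟩ := hdense.exists_mem_open Metric.isOpen_ball
      ⟨a, Metric.mem_ball_self hε⟩
    obtain ⟨u, rfl⟩ := hqU
    exact aux_interior hε u hqball
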